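/- The functions κ(d,·)Ω are stationary solutions (verification of the Lorentz-transformed solitons). For every d ∈ (−1,1) and every y ∈ (−1,1), the function y ↦ κ(d,y) satisfies ρ(y)^{−1} ( ρ(y)(1−y²) ∂_y κ(d,y) )' − 2(p+1)/(p−1)² · κ(d,y) + κ(d,y)^p = 0. Consequently, for any unit vector Ω ∈ ℝ^m, w = κ(d,·)Ω satisfies ρ^{−1}(ρ(1−y²) w')' − 2(p+1)/(p−1)² w + |w|^{p−1} w = 0 on (−1,1). -/

import Mathlib

open MeasureTheory Real Set

/-- `κ₀ = (2(p+1)/(p-1)²)^{1/(p-1)}` -/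
noncomputable def kappa0 (p : ℝ) : ℝ := (2 * (p + 1) / (p - 1) ^ 2) ^ (1 / (p - 1))

/-- `κ(d,y) = κ₀ (1-d²)^{1/(p-1)} (1+dy)^{-2/(p-1)}` -/
noncomputable def kappa (p d y : ℝ) : ℝ :=
  kappa0 p * (1 - d ^ 2) ^ (1 / (p - 1)) * (1 + d * y) ^ (-(2 / (p - 1)))

/-- the weight `ρ(y) = (1-y²)^{2/(p-1)}` -/
noncomputable def rho (p y : ℝ) : ℝ := (1 - y ^ 2) ^ (2 / (p - 1))

/-- **The functions `κ(d,·)Ω` are stationary solutions** (verification of the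
Lorentz-transformed solitons). -/
theorem kappa_is_stationary (p : ℝ) (hp : 1 < p) (m : ℕ) (hm : 2 ≤ m)
    (d : ℝ) (hd : d ∈ Set.Ioo (-1 : ℝ) 1) :
    (∀ y ∈ Set.Ioo (-1 : ℝ) 1,
      (rho p y)⁻¹ *
          deriv (fun z => rho p z * (1 - z ^ 2) * deriv (fun z' => kappa p d z') z) y
        - 2 * (p + 1) / (p - 1) ^ 2 * kappa p d y + kappa p d y ^ p = 0) ∧
    ∀ Ω : EuclideanSpace ℝ (Fin m), ‖Ω‖ = 1 →
      ∀ y ∈ Set.Ioo (-1 : ℝ) 1,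
        (rho p y)⁻¹ •
            deriv (fun z => (rho p z * (1 - z ^ 2)) •
              deriv (fun z' => kappa p d z' • Ω) z) y
          - (2 * (p + 1) / (p - 1) ^ 2) • (kappa p d y • Ω)
          + ‖kappa p d y • Ω‖ ^ (p - 1) • (kappa p d y • Ω) = 0 := by
  obtain ⟨hd1, hd2⟩ := hd
  have hp1 : (0:ℝ) < p - 1 := by linarith
  set a : ℝ := 2 / (p - 1) with ha_def
  have ha : 0 < a := by positivity
  have hdd : (0:ℝ) < 1 - d ^ 2 := by nlinarith
  set K : ℝ := kappa0 p * (1 - d ^ 2) ^ (1 / (p - 1)) with hK_def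
  have hk0 : 0 < kappa0 p := by
    unfold kappa0; positivity
  have hK : 0 < K := by
    rw [hK_def]; positivity
  have hv : ∀ y ∈ Ioo (-1:ℝ) 1, 0 < 1 + d * y := by
    rintro y ⟨h1, h2⟩; nlinarith
  have hu : ∀ y ∈ Ioo (-1:ℝ) 1, 0 < 1 - y ^ 2 := by
    rintro y ⟨h1, h2⟩; nlinarith
  have hkval : ∀ y : ℝ, kappa p d y = K * (1 + d * y) ^ (-a) := by
    intro y
    simp only [kappa]; rfl
  have hlam : 2 * (p + 1) / (p - 1) ^ 2 = a * (a + 1) := by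
    rw [ha_def]; field_simp; ring
  have hap : a * (p - 1) = 2 := by
    rw [ha_def]; field_simp
  -- derivative of kappa
  have hker : ∀ y ∈ Ioo (-1:ℝ) 1,
      HasDerivAt (fun z => kappa p d z) (K * (-a * (1 + d * y) ^ (-a - 1) * d)) y := by
    intro y hy
    have h1 : HasDerivAt (fun z : ℝ => 1 + d * z) d y := by
      simpa using ((hasDerivAt_id y).const_mul d).const_add 1
    have h2 := (h1.rpow_const (p := -a) (Or.inl (hv y hy).ne')).const_mul K
    have h2' : HasDerivAt (fun z => K * (1 + d * z) ^ (-a))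
        (K * (-a * (1 + d * y) ^ (-a - 1) * d)) y := by
      exact h2.congr_deriv (by ring)
    simpa only [hkval] using h2'
  -- the product equals a cleaner function on Ioo
  have hgeq : ∀ z ∈ Ioo (-1:ℝ) 1,
      rho p z * (1 - z ^ 2) * deriv (fun z' => kappa p d z') z
        = (K * -a * d) * ((1 - z ^ 2) ^ (a + 1) * (1 + d * z) ^ (-a - 1)) := by
    intro z hz
    rw [(hker z hz).deriv]
    simp only [rho]
    rw [← ha_def]
    have e1 : (1 - z ^ 2) ^ (a + 1) = (1 - z ^ 2) ^ a * (1 - z ^ 2) := by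
      rw [Real.rpow_add (hu z hz), Real.rpow_one]
    rw [e1]; ring
  -- derivative of the cleaner function
  have hgd : ∀ y ∈ Ioo (-1:ℝ) 1,
      HasDerivAt (fun z => (K * -a * d) * ((1 - z ^ 2) ^ (a + 1) * (1 + d * z) ^ (-a - 1)))
        ((K * -a * d) * (((a + 1) * (1 - y ^ 2) ^ a * (-(2 * y))) * (1 + d * y) ^ (-a - 1)
          + (1 - y ^ 2) ^ (a + 1) * ((-a - 1) * (1 + d * y) ^ (-a - 2) * d))) y := by
    intro y hy
    have h1 : HasDerivAt (fun z : ℝ => 1 + d * z) d y := by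
      simpa using ((hasDerivAt_id y).const_mul d).const_add 1
    have h3 : HasDerivAt (fun z : ℝ => 1 - z ^ 2) (-(2 * y)) y := by
      simpa using (hasDerivAt_pow 2 y).const_sub 1
    have h4 := h3.rpow_const (p := a + 1) (Or.inl (hu y hy).ne')
    have h5 := h1.rpow_const (p := -a - 1) (Or.inl (hv y hy).ne')
    have h6 := (h4.mul h5).const_mul (K * -a * d)
    refine h6.congr_deriv ?_
    rw [show a + 1 - 1 = a by ring, show -a - 1 - 1 = -a - 2 by ring]
    ring
  -- deriv of the full inner function
  have hder : ∀ y ∈ Ioo (-1:ℝ) 1,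
      deriv (fun z => rho p z * (1 - z ^ 2) * deriv (fun z' => kappa p d z') z) y
        = (K * -a * d) * (((a + 1) * (1 - y ^ 2) ^ a * (-(2 * y))) * (1 + d * y) ^ (-a - 1)
          + (1 - y ^ 2) ^ (a + 1) * ((-a - 1) * (1 + d * y) ^ (-a - 2) * d)) := by
    intro y hy
    have heq : (fun z => rho p z * (1 - z ^ 2) * deriv (fun z' => kappa p d z') z)
        =ᶠ[nhds y] (fun z => (K * -a * d) * ((1 - z ^ 2) ^ (a + 1) * (1 + d * z) ^ (-a - 1))) := by
      filter_upwards [isOpen_Ioo.mem_nhds hy] with z hz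
      exact hgeq z hz
    rw [heq.deriv_eq, (hgd y hy).deriv]
  -- the scalar ODE
  have key : ∀ y ∈ Ioo (-1:ℝ) 1,
      (rho p y)⁻¹ *
          deriv (fun z => rho p z * (1 - z ^ 2) * deriv (fun z' => kappa p d z') z) y
        - 2 * (p + 1) / (p - 1) ^ 2 * kappa p d y + kappa p d y ^ p = 0 := by
    intro y hy
    have huy := hu y hy
    have hvy := hv y hy
    rw [hder y hy, hlam]
    simp only [hkval]
    have hrho : rho p y = (1 - y ^ 2) ^ a := by
      simp only [rho]; rfl
    rw [hrho]
    have e1 : (1 - y ^ 2) ^ (a + 1) = (1 - y ^ 2) ^ a * (1 - y ^ 2) := by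
      rw [Real.rpow_add huy, Real.rpow_one]
    have e2 : (1 + d * y) ^ (-a - 1) = (1 + d * y) ^ (-a - 2) * (1 + d * y) := by
      rw [show -a - 1 = -a - 2 + 1 by ring, Real.rpow_add hvy, Real.rpow_one]
    have e3 : (1 + d * y) ^ (-a) = (1 + d * y) ^ (-a - 2) * ((1 + d * y) * (1 + d * y)) := by
      rw [show -a = -a - 2 + 1 + 1 by ring, Real.rpow_add hvy, Real.rpow_add hvy, Real.rpow_one]
      ring
    have eK : K ^ (p - 1) = a * (a + 1) * (1 - d ^ 2) := by
      rw [hK_def, Real.mul_rpow hk0.le (Real.rpow_nonneg hdd.le _),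
          ← Real.rpow_mul hdd.le, one_div_mul_cancel hp1.ne', Real.rpow_one]
      unfold kappa0
      rw [← Real.rpow_mul (by positivity), one_div_mul_cancel hp1.ne', Real.rpow_one, hlam]
    have e4 : (K * (1 + d * y) ^ (-a)) ^ p
        = a * (a + 1) * (1 - d ^ 2) * K * (1 + d * y) ^ (-a - 2) := by
      rw [Real.mul_rpow hK.le (Real.rpow_nonneg hvy.le _),
          ← Real.rpow_mul hvy.le,
          show -a * p = -a - 2 from by linear_combination -hap,
          show K ^ p = K ^ (p - 1) * K from by
            rw [← Real.rpow_add_one hK.ne' (p - 1)]; norm_num,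
          eK]
    rw [e4, e2, e1, e3]
    have hA : (1 - y ^ 2) ^ a ≠ 0 := (Real.rpow_pos_of_pos huy a).ne'
    field_simp
    ring
  refine ⟨key, ?_⟩
  intro Ω hΩ y hy
  have huy := hu y hy
  have hvy := hv y hy
  have hκpos : 0 < kappa p d y := by
    rw [hkval]
    positivity
  have hderΩ : deriv (fun z => (rho p z * (1 - z ^ 2)) •
        deriv (fun z' => kappa p d z' • Ω) z) y
      = (deriv (fun z => rho p z * (1 - z ^ 2) * deriv (fun z' => kappa p d z') z) y) • Ω := by
    have heq1 : (fun z => (rho p z * (1 - z ^ 2)) • deriv (fun z' => kappa p d z' • Ω) z)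
        =ᶠ[nhds y] (fun z =>
          ((K * -a * d) * ((1 - z ^ 2) ^ (a + 1) * (1 + d * z) ^ (-a - 1))) • Ω) := by
      filter_upwards [isOpen_Ioo.mem_nhds hy] with z hz
      rw [((hker z hz).smul_const Ω).deriv, smul_smul, ← (hker z hz).deriv, hgeq z hz]
    rw [heq1.deriv_eq, ((hgd y hy).smul_const Ω).deriv, hder y hy]
  have hnorm : ‖kappa p d y • Ω‖ ^ (p - 1) = kappa p d y ^ (p - 1) := by
    rw [norm_smul, hΩ, mul_one, Real.norm_eq_abs, abs_of_pos hκpos]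
  rw [hderΩ, hnorm, smul_smul, smul_smul, smul_smul,
      ← Real.rpow_add_one hκpos.ne' (p - 1), show p - 1 + 1 = p by ring,
      ← sub_smul, ← add_smul, key y hy, zero_smul]
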